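/- Let R ⊆ S ⊆ T be extensions of commutative rings such that T is a free module of the same finite rank n over both S and over R. Then R = S. -/

import Mathlib

/-- Let `R ⊆ S ⊆ T` be extensions of commutative rings such that `T` is a
free module of the same finite rank `n` over both `S` and `R`. Then `R = S`, i.e. the
inclusion `R → S` is surjective. -/
theorem stmt_2 {R S T : Type*} [CommRing R] [CommRing S] [CommRing T]
    [Algebra R S] [Algebra S T] [Algebra R T] [IsScalarTower R S T]
    (hRS : Function.Injective (algebraMap R S))
    (hST : Function.Injective (algebraMap S T))
    (n : ℕ) (bS : Module.Basis (Fin n) S T) (bR : Module.Basis (Fin n) R T) :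
    Function.Surjective (algebraMap R S) := by
  rcases Nat.eq_zero_or_pos n with hn | hn
  · subst hn
    have hT : Subsingleton T := ⟨fun a b => bS.repr.injective (Subsingleton.elim _ _)⟩
    have hS : Subsingleton S := hST.subsingleton
    exact fun s => ⟨0, Subsingleton.elim _ _⟩
  · set A : Matrix (Fin n) (Fin n) S := Matrix.of fun k i => bS.repr (bR i) k with hA
    set C : S → Matrix (Fin n) (Fin n) S :=
      fun s => Matrix.of fun i j => algebraMap R S (bR.repr (s • bS j) i) with hC
    have key : ∀ s : S, A * C s = s • (1 : Matrix (Fin n) (Fin n) S) := by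
      intro s
      ext k j
      have h1 : (s • bS j : T) = ∑ i, (bR.repr (s • bS j) i) • bR i := (bR.sum_repr _).symm
      have h2 := congrArg (fun t => bS.repr t k) h1
      simp only [_root_.map_smul, map_sum, Finsupp.smul_apply, Finsupp.coe_finset_sum,
        Finset.sum_apply, Module.Basis.repr_self, smul_eq_mul, Finsupp.single_apply] at h2
      have h3 : ∀ i : Fin n, bS.repr ((bR.repr (s • bS j) i) • bR i) k
          = algebraMap R S (bR.repr (s • bS j) i) * bS.repr (bR i) k := by
        intro i
        rw [← algebraMap_smul S (bR.repr (s • bS j) i) (bR i), _root_.map_smul,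
          Finsupp.smul_apply, smul_eq_mul]
      simp only [h3] at h2
      simp only [Matrix.mul_apply, Matrix.smul_apply, Matrix.one_apply, hA, hC,
        Matrix.of_apply, smul_eq_mul, mul_ite, mul_one, mul_zero]
      calc ∑ x, bS.repr (bR x) k * algebraMap R S (bR.repr (s • bS j) x)
          = ∑ x, algebraMap R S (bR.repr (s • bS j) x) * bS.repr (bR x) k := by
            exact Finset.sum_congr rfl fun x _ => mul_comm _ _
        _ = s * (if j = k then 1 else 0) := h2.symm
        _ = if k = j then s else 0 := by
            rcases eq_or_ne k j with h | h
            · subst h; simp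
            · simp [h, Ne.symm h]
    have hAM : A * C 1 = 1 := by
      have := key 1
      rwa [one_smul] at this
    have hMA : C 1 * A = 1 := mul_eq_one_comm.mp hAM
    have hCs : ∀ s : S, C s = s • C 1 := by
      intro s
      calc C s = (C 1 * A) * C s := by rw [hMA, one_mul]
        _ = C 1 * (A * C s) := by rw [Matrix.mul_assoc]
        _ = C 1 * (s • 1) := by rw [key]
        _ = s • C 1 := by rw [Matrix.mul_smul, mul_one]
    intro s
    set j0 : Fin n := ⟨0, hn⟩
    have h1 : (∑ i, A j0 i * C 1 i j0) = 1 := by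
      have := congrFun (congrFun hAM j0) j0
      simpa [Matrix.mul_apply, Matrix.one_apply] using this
    refine ⟨∑ i, bR.repr ((s * A j0 i) • bS j0) i, ?_⟩
    rw [map_sum]
    have h2 : ∀ i : Fin n, algebraMap R S (bR.repr ((s * A j0 i) • bS j0) i)
        = (s * A j0 i) * C 1 i j0 := by
      intro i
      have := congrFun (congrFun (hCs (s * A j0 i)) i) j0
      simp only [Matrix.smul_apply, smul_eq_mul, hC, Matrix.of_apply] at this ⊢
      exact this
    rw [Finset.sum_congr rfl fun i _ => h2 i]
    calc (∑ i, (s * A j0 i) * C 1 i j0) = s * ∑ i, A j0 i * C 1 i j0 := by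
          rw [Finset.mul_sum]; exact Finset.sum_congr rfl fun i _ => by ring
      _ = s := by rw [h1, mul_one]
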